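/- For the natural representation V of G(4,2,2), the dual V^∨ is isomorphic as a G-representation to V ⊗ χ₂, where χ₂(i^a,i^b,σ^c)=i^{a+b}. -/

import Mathlib

open Complex

/-- `μ₄`-pairs with even exponent sum: `K = {(i^a, i^b) : a + b ≡ 0 mod 2}`,
realized as the subgroup of `ℂˣ × ℂˣ` of pairs of fourth roots of unity whose
product is a square root of unity. -/
def Kgrp : Subgroup (ℂˣ × ℂˣ) where
  carrier := {p | (p.1 : ℂ) ^ 4 = 1 ∧ (p.2 : ℂ) ^ 4 = 1 ∧ ((p.1 : ℂ) * (p.2 : ℂ)) ^ 2 = 1}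
  one_mem' := by simp
  mul_mem' := by
    rintro a b ⟨ha1, ha2, ha3⟩ ⟨hb1, hb2, hb3⟩
    refine ⟨?_, ?_, ?_⟩
    · rw [Prod.fst_mul, Units.val_mul, mul_pow, ha1, hb1, one_mul]
    · rw [Prod.snd_mul, Units.val_mul, mul_pow, ha2, hb2, one_mul]
    · rw [Prod.fst_mul, Prod.snd_mul, Units.val_mul, Units.val_mul,
        mul_mul_mul_comm, mul_pow, ha3, hb3, one_mul]
  inv_mem' := by
    rintro a ⟨h1, h2, h3⟩
    refine ⟨?_, ?_, ?_⟩
    · rw [Prod.fst_inv, Units.val_inv_eq_inv_val, inv_pow, h1, inv_one]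
    · rw [Prod.snd_inv, Units.val_inv_eq_inv_val, inv_pow, h2, inv_one]
    · rw [Prod.fst_inv, Prod.snd_inv, Units.val_inv_eq_inv_val,
        Units.val_inv_eq_inv_val, ← mul_inv, inv_pow, h3, inv_one]

/-- The coordinate swap as an automorphism of `K`. -/
def swapAut : MulAut Kgrp where
  toFun p := ⟨(p.1.2, p.1.1), p.2.2.1, p.2.1, by rw [mul_comm]; exact p.2.2.2⟩
  invFun p := ⟨(p.1.2, p.1.1), p.2.2.1, p.2.1, by rw [mul_comm]; exact p.2.2.2⟩
  left_inv p := rfl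
  right_inv p := rfl
  map_mul' p q := rfl

/-- The `S₂ = {±1}`-action on `K` by swapping coordinates. -/
noncomputable def sw : ℤˣ →* MulAut Kgrp where
  toFun c := if c = 1 then 1 else swapAut
  map_one' := by simp
  map_mul' c d := by
    have hs : swapAut * swapAut = 1 := MulEquiv.ext fun x => rfl
    rcases Int.units_eq_one_or c with hc | hc <;>
      rcases Int.units_eq_one_or d with hd | hd <;>
        subst hc <;> subst hd <;> simp [hs]

/-- The complex reflection group `G(4,2,2) = K ⋊ S₂`. -/
abbrev G422 : Type := Kgrp ⋊[sw] ℤˣ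

/-- The element `(i^a, i^b, σ^c)` of `G(4,2,2)`. -/
noncomputable def elG (u v : ℂˣ) (h : (u, v) ∈ Kgrp) (c : ℤˣ) : G422 :=
  ⟨⟨(u, v), h⟩, c⟩

lemma mem_Kgrp_neg_one_neg_one : ((-1 : ℂˣ), (-1 : ℂˣ)) ∈ Kgrp := by
  refine ⟨?_, ?_, ?_⟩ <;> norm_num

/-- The central element `(-1, -1, 1)`. -/
noncomputable def cenG : G422 := elG (-1) (-1) mem_Kgrp_neg_one_neg_one 1

lemma mem_Kgrp_one_neg_one : ((1 : ℂˣ), (-1 : ℂˣ)) ∈ Kgrp := by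
  refine ⟨?_, ?_, ?_⟩ <;> norm_num

lemma mem_Kgrp_neg_one_one : ((-1 : ℂˣ), (1 : ℂˣ)) ∈ Kgrp := by
  refine ⟨?_, ?_, ?_⟩ <;> norm_num

lemma mem_Kgrp_one_one : ((1 : ℂˣ), (1 : ℂˣ)) ∈ Kgrp := by
  refine ⟨?_, ?_, ?_⟩ <;> norm_num

/-- `i` as a unit of `ℂ`. -/
noncomputable def uI : ℂˣ := Units.mk0 Complex.I Complex.I_ne_zero

lemma mem_Kgrp_uI_uI : (uI, uI) ∈ Kgrp := by
  refine ⟨?_, ?_, ?_⟩ <;> simp [uI] <;> norm_num [pow_succ, Complex.I_mul_I]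

lemma mem_Kgrp_uI_neg_uI : (uI, -uI) ∈ Kgrp := by
  refine ⟨?_, ?_, ?_⟩ <;> simp [uI] <;> norm_num [pow_succ, Complex.I_mul_I]

/-- The matrix of the natural 2-dimensional representation of `G(4,2,2)` on `ℂ²`:
`(i^a, i^b)` acts diagonally and `σ` swaps the coordinates. -/
noncomputable def mval (g : G422) : Matrix (Fin 2) (Fin 2) ℂ :=
  if g.right = 1 then !![(g.left.1.1 : ℂ), 0; 0, (g.left.1.2 : ℂ)]
  else !![0, (g.left.1.1 : ℂ); (g.left.1.2 : ℂ), 0]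

lemma neg_one_ne_one_int_units : (-1 : ℤˣ) ≠ 1 := by decide

/-- The natural representation as a monoid homomorphism into `2 × 2` matrices. -/
noncomputable def mvalHom : G422 →* Matrix (Fin 2) (Fin 2) ℂ where
  toFun := mval
  map_one' := by
    simp [mval, Matrix.one_fin_two]
  map_mul' a b := by
    rcases Int.units_eq_one_or a.right with hc | hc <;>
      rcases Int.units_eq_one_or b.right with hd | hd <;>
        simp [mval, SemidirectProduct.mul_left, SemidirectProduct.mul_right, sw, swapAut,
          hc, hd, neg_one_ne_one_int_units, Matrix.mul_fin_two]

/-- The natural representation `V` of `G(4,2,2)` on `ℂ²`. -/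
noncomputable def rhoV : Representation ℂ G422 (Fin 2 → ℂ) where
  toFun g := Matrix.toLin' (mvalHom g)
  map_one' := by simp [Module.End.one_eq_id]
  map_mul' g h := by
    simp [Matrix.toLin'_mul, Module.End.mul_eq_comp]

/-- The character `χ₂(i^a, i^b, σ^c) = i^{a+b}` of `G(4,2,2)`. -/
noncomputable def chi2 : G422 →* ℂˣ where
  toFun g := g.left.1.1 * g.left.1.2
  map_one' := by simp
  map_mul' a b := by
    rcases Int.units_eq_one_or a.right with hc | hc <;>
      simp [SemidirectProduct.mul_left, sw, swapAut, hc, neg_one_ne_one_int_units,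
        mul_mul_mul_comm, mul_comm, mul_left_comm]

/-- The character `χ₃(i^a, i^b, σ^c) = i^{a-b}` of `G(4,2,2)`. -/
noncomputable def chi3 : G422 →* ℂˣ where
  toFun g := g.left.1.1 * (g.left.1.2)⁻¹
  map_one' := by simp
  map_mul' a b := by
    have key : (b.left.1.1 : ℂˣ) * (b.left.1.2)⁻¹ = (b.left.1.2) * (b.left.1.1)⁻¹ := by
      obtain ⟨h1, h2, h3⟩ := b.left.2
      have hne1 : ((b.left.1.1 : ℂˣ) : ℂ) ≠ 0 := Units.ne_zero _
      have hne2 : ((b.left.1.2 : ℂˣ) : ℂ) ≠ 0 := Units.ne_zero _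
      have h22 : ((b.left.1.1 : ℂˣ) : ℂ) ^ 2 = ((b.left.1.2 : ℂˣ) : ℂ) ^ 2 := by
        have hmul : ((b.left.1.1 : ℂˣ) : ℂ) ^ 2 * ((b.left.1.2 : ℂˣ) : ℂ) ^ 2 = 1 := by
          rw [← mul_pow]; exact h3
        have := mul_left_cancel₀ (pow_ne_zero 2 hne1)
          (show ((b.left.1.1 : ℂˣ) : ℂ) ^ 2 * ((b.left.1.1 : ℂˣ) : ℂ) ^ 2 =
              ((b.left.1.1 : ℂˣ) : ℂ) ^ 2 * ((b.left.1.2 : ℂˣ) : ℂ) ^ 2 by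
            rw [hmul, ← pow_add]; exact h1)
        exact this
      rw [Units.ext_iff]
      push_cast
      field_simp
      linear_combination h22
    rcases Int.units_eq_one_or a.right with hc | hc
    · simp [SemidirectProduct.mul_left, sw, hc, mul_inv, mul_comm, mul_left_comm, mul_assoc]
    · simp only [SemidirectProduct.mul_left, sw, hc, MonoidHom.coe_mk, OneHom.coe_mk,
        if_neg neg_one_ne_one_int_units]
      show a.left.1.1 * b.left.1.2 * (a.left.1.2 * b.left.1.1)⁻¹ =
        a.left.1.1 * (a.left.1.2)⁻¹ * (b.left.1.1 * (b.left.1.2)⁻¹)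
      rw [key]
      simp [mul_inv, mul_comm, mul_left_comm, mul_assoc]

/-- The character `χ₄(i^a, i^b, σ^c) = sgn(σ^c)` of `G(4,2,2)`. -/
noncomputable def chi4 : G422 →* ℂˣ :=
  (Units.map (Int.castRingHom ℂ).toMonoidHom).comp SemidirectProduct.rightHom

lemma rhoV_apply' (g : G422) (x : Fin 2 → ℂ) :
    rhoV g x = if g.right = 1 then ![(g.left.1.1 : ℂ) * x 0, (g.left.1.2 : ℂ) * x 1]
      else ![(g.left.1.1 : ℂ) * x 1, (g.left.1.2 : ℂ) * x 0] := by
  rcases Int.units_eq_one_or g.right with hc | hc <;>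
    · funext i
      fin_cases i <;>
        simp [rhoV, mvalHom, mval, hc, neg_one_ne_one_int_units, Matrix.toLin'_apply,
          Matrix.mulVec, dotProduct, Fin.sum_univ_two]

lemma dual_decomp (f : Module.Dual ℂ (Fin 2 → ℂ)) (x : Fin 2 → ℂ) :
    f x = x 0 * f (Pi.single 0 1) + x 1 * f (Pi.single 1 1) := by
  have hx : x = x 0 • (Pi.single 0 1 : Fin 2 → ℂ) + x 1 • (Pi.single 1 1 : Fin 2 → ℂ) := by
    funext i; fin_cases i <;> simp
  conv_lhs => rw [hx]
  simp [smul_eq_mul]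

/-- The twisting equivalence `V^∨ ≃ V`, `f ↦ (f(e₁), f(e₀))`. -/
noncomputable def myE : Module.Dual ℂ (Fin 2 → ℂ) ≃ₗ[ℂ] (Fin 2 → ℂ) where
  toFun f := ![f (Pi.single 1 1), f (Pi.single 0 1)]
  map_add' f g := by funext i; fin_cases i <;> simp
  map_smul' c f := by funext i; fin_cases i <;> simp
  invFun w := w 1 • (LinearMap.proj 0 : (Fin 2 → ℂ) →ₗ[ℂ] ℂ) +
    w 0 • (LinearMap.proj 1 : (Fin 2 → ℂ) →ₗ[ℂ] ℂ)
  left_inv f := by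
    apply LinearMap.ext; intro x
    simp only [LinearMap.add_apply, LinearMap.smul_apply, LinearMap.proj_apply, smul_eq_mul,
      Matrix.cons_val_zero, Matrix.cons_val_one, Matrix.head_cons]
    rw [dual_decomp f x]; ring
  right_inv w := by funext i; fin_cases i <;> simp

lemma myE_key (g : G422) (f : Module.Dual ℂ (Fin 2 → ℂ)) :
    myE (rhoV.dual g f) = ((chi2 g : ℂˣ) : ℂ) • rhoV g (myE f) := by
  classical
  set U : ℂ := (g.left.1.1 : ℂ) with hU
  set V : ℂ := (g.left.1.2 : ℂ) with hV
  obtain ⟨hu4, hv4, huv⟩ := g.left.2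
  rw [← hU] at hu4 huv
  rw [← hV] at hv4 huv
  have hUinv : ((g.left.1.1⁻¹ : ℂˣ) : ℂ) = U * V ^ 2 := by
    rw [Units.val_inv_eq_inv_val, ← hU]
    exact inv_eq_of_mul_eq_one_left (by linear_combination huv)
  have hVinv : ((g.left.1.2⁻¹ : ℂˣ) : ℂ) = U ^ 2 * V := by
    rw [Units.val_inv_eq_inv_val, ← hV]
    exact inv_eq_of_mul_eq_one_left (by linear_combination huv)
  have hchi : ((chi2 g : ℂˣ) : ℂ) = U * V := rfl
  rcases Int.units_eq_one_or g.right with hc | hc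
  · have h0 : rhoV g⁻¹ (Pi.single 0 1) = (U * V ^ 2) • (Pi.single 0 1 : Fin 2 → ℂ) := by
      rw [rhoV_apply']
      simp only [SemidirectProduct.inv_right, SemidirectProduct.inv_left, hc, inv_one,
        if_true, map_one, MulAut.one_apply]
      funext i; fin_cases i <;> simp [hUinv]
    have h1 : rhoV g⁻¹ (Pi.single 1 1) = (U ^ 2 * V) • (Pi.single 1 1 : Fin 2 → ℂ) := by
      rw [rhoV_apply']
      simp only [SemidirectProduct.inv_right, SemidirectProduct.inv_left, hc, inv_one,
        if_true, map_one, MulAut.one_apply]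
      funext i; fin_cases i <;> simp [hVinv]
    funext i
    simp only [Representation.dual_apply, Module.Dual.transpose_apply]
    rw [rhoV_apply' g]
    fin_cases i <;>
      simp [myE, h0, h1, hc, hchi, map_smul, smul_eq_mul] <;> ring
  · have h0 : rhoV g⁻¹ (Pi.single 0 1) = (U * V ^ 2) • (Pi.single 1 1 : Fin 2 → ℂ) := by
      rw [rhoV_apply']
      simp only [SemidirectProduct.inv_right, SemidirectProduct.inv_left, hc, sw, swapAut,
        neg_one_ne_one_int_units, if_false, inv_neg, inv_one, MonoidHom.coe_mk, OneHom.coe_mk,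
        MulEquiv.coe_mk, Equiv.coe_fn_mk]
      funext i; fin_cases i <;> simp [hUinv, hVinv]
    have h1 : rhoV g⁻¹ (Pi.single 1 1) = (U ^ 2 * V) • (Pi.single 0 1 : Fin 2 → ℂ) := by
      rw [rhoV_apply']
      simp only [SemidirectProduct.inv_right, SemidirectProduct.inv_left, hc, sw, swapAut,
        neg_one_ne_one_int_units, if_false, inv_neg, inv_one, MonoidHom.coe_mk, OneHom.coe_mk,
        MulEquiv.coe_mk, Equiv.coe_fn_mk]
      funext i; fin_cases i <;> simp [hUinv, hVinv]
    funext i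
    simp only [Representation.dual_apply, Module.Dual.transpose_apply]
    rw [rhoV_apply' g]
    fin_cases i <;>
      simp [myE, h0, h1, hc, hchi, neg_one_ne_one_int_units, map_smul, smul_eq_mul] <;> ring

/-- The dual of the natural representation of `G(4,2,2)` is isomorphic to `V ⊗ χ₂`,
i.e. there is a linear equivalence `V^∨ ≃ V` twisting the action by `χ₂`. -/
theorem dual_eq_V_tensor_chi2 :
    ∃ e : Module.Dual ℂ (Fin 2 → ℂ) ≃ₗ[ℂ] (Fin 2 → ℂ),
      ∀ (g : G422) (f : Module.Dual ℂ (Fin 2 → ℂ)),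
        e (rhoV.dual g f) = ((chi2 g : ℂˣ) : ℂ) • rhoV g (e f) := by
  exact ⟨myE, myE_key⟩
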